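/- Let R be a Noetherian domain with fraction field K, R ≠ K, and let S be the integral closure of R in K. Then S is a finite R-module (i.e., R is N-1) if and only if the R-adic topology and the S-adic topology on K agree. -/

import Mathlib

open Topology

/-- The collection `{aR + b : a ∈ K^×, b ∈ K}`, a basis for the `R`-adic topology. -/
def adicBasis {K : Type*} [Field K] (R : Subring K) : Set (Set K) :=
  {s | ∃ a b : K, a ≠ 0 ∧ s = {x | ∃ r ∈ R, x = a * r + b}}

/-- The `R`-adic topology on `K`: the topology with basis `{aR + b : a ∈ K^×, b ∈ K}`. -/
def adicTopology {K : Type*} [Field K] (R : Subring K) : TopologicalSpace K :=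
  TopologicalSpace.generateFrom (adicBasis R)

/-- `S` is a finite `R`-module: it is generated, as an `R`-module, by finitely many
elements of `S`. -/
def IsFiniteModuleOver {K : Type*} [Field K] (R S : Subring K) : Prop :=
  ∃ t : Finset K, (↑t : Set K) ⊆ (S : Set K) ∧
    ∀ s ∈ S, ∃ c : K → K, (∀ x ∈ t, c x ∈ R) ∧ s = ∑ x ∈ t, c x * x

namespace Statement3Aux

variable {K : Type*} [Field K]

/-- A set is open in the `R`-adic topology if every point has a basic neighborhood
inside it. -/
lemma isOpen_of_basic_nhds (R : Subring K) {u : Set K}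
    (h : ∀ x ∈ u, ∃ a b : K, a ≠ 0 ∧ x ∈ {y | ∃ r ∈ R, y = a * r + b} ∧
      {y | ∃ r ∈ R, y = a * r + b} ⊆ u) :
    IsOpen[adicTopology R] u := by
  have hu : u = ⋃₀ {v | v ∈ adicBasis R ∧ v ⊆ u} := by
    apply subset_antisymm
    · intro x hx
      obtain ⟨a, b, ha, hxm, hsub⟩ := h x hx
      exact ⟨_, ⟨⟨a, b, ha, rfl⟩, hsub⟩, hxm⟩
    · rintro x ⟨v, ⟨_, hvu⟩, hxv⟩
      exact hvu hxv
  rw [hu]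
  exact TopologicalSpace.GenerateOpen.sUnion _ fun v hv =>
    TopologicalSpace.GenerateOpen.basic v hv.1

lemma le_left (R S : Subring K) (hRS : (R : Set K) ⊆ (S : Set K)) :
    adicTopology R ≤ adicTopology S := by
  apply le_generateFrom
  rintro u ⟨a, b, ha, rfl⟩
  apply isOpen_of_basic_nhds
  rintro x ⟨s, hs, rfl⟩
  refine ⟨a, a * s + b, ha, ⟨0, R.zero_mem, by ring⟩, ?_⟩
  rintro y ⟨r, hr, rfl⟩
  exact ⟨r + s, S.add_mem (hRS hr) hs, by ring⟩

lemma le_right (R S : Subring K) (c : K) (hc : c ≠ 0)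
    (hcS : ∀ s ∈ S, c * s ∈ R) :
    adicTopology S ≤ adicTopology R := by
  apply le_generateFrom
  rintro u ⟨a, b, ha, rfl⟩
  apply isOpen_of_basic_nhds
  rintro x ⟨r, hr, rfl⟩
  refine ⟨a * c, a * r + b, mul_ne_zero ha hc, ⟨0, S.zero_mem, by ring⟩, ?_⟩
  rintro y ⟨s, hs, rfl⟩
  exact ⟨c * s + r, R.add_mem (hcS s hs) hr, by ring⟩

/-- From a finite family of basic `S`-sets containing `0`, extract a common
"conductor-like" element of `R`. -/
lemma key_induction (R S : Subring K)
    (hRfrac : ∀ x : K, ∃ a ∈ R, ∃ b ∈ R, b ≠ 0 ∧ x = a / b)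
    (hRS : (R : Set K) ⊆ (S : Set K))
    (f : Set (Set K)) (hffin : f.Finite) :
    f ⊆ adicBasis S → (∀ u ∈ f, (0 : K) ∈ u) →
    ∃ c : K, c ∈ R ∧ c ≠ 0 ∧ ∀ s ∈ S, ∀ u ∈ f, c * s ∈ u := by
  refine Set.Finite.induction_on
    (motive := fun f _ => f ⊆ adicBasis S → (∀ u ∈ f, (0 : K) ∈ u) →
      ∃ c : K, c ∈ R ∧ c ≠ 0 ∧ ∀ s ∈ S, ∀ u ∈ f, c * s ∈ u)
    f hffin ?_ ?_
  · intro _ _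
    exact ⟨1, R.one_mem, one_ne_zero, fun s hs u hu => absurd hu (Set.notMem_empty u)⟩
  · intro u f hu hf ih hsub h0
    obtain ⟨c, hcR, hc, hcprop⟩ := ih (fun v hv => hsub (Set.mem_insert_of_mem _ hv))
      (fun v hv => h0 v (Set.mem_insert_of_mem _ hv))
    obtain ⟨a, b, ha, hu_eq⟩ := hsub (Set.mem_insert u f)
    have h0u : (0 : K) ∈ u := h0 u (Set.mem_insert u f)
    rw [hu_eq] at h0u
    obtain ⟨s0, hs0, hs0eq⟩ := h0u
    -- write a⁻¹ = p / q with p, q ∈ R, q ≠ 0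
    obtain ⟨p, hp, q, hq, hqne, hpq⟩ := hRfrac a⁻¹
    have hpne : p ≠ 0 := by
      intro h
      apply inv_ne_zero ha
      rw [hpq, h, zero_div]
    refine ⟨q * c, R.mul_mem hq hcR, mul_ne_zero hqne hc, ?_⟩
    intro s hs v hv
    rcases Set.mem_insert_iff.mp hv with hv | hv
    · -- the new set u
      subst hv
      rw [hu_eq]
      refine ⟨p * (c * s) + s0, ?_, ?_⟩
      · exact S.add_mem (S.mul_mem (hRS hp) (S.mul_mem (hRS hcR) hs)) hs0
      · have hap : a * p = q := by
          have : a⁻¹ * q = p := by rw [hpq]; field_simp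
          rw [← this]; field_simp
        calc q * c * s = a * p * (c * s) + 0 := by rw [hap]; ring
          _ = a * (p * (c * s) + s0) + b := by rw [hs0eq]; ring
    · -- an old set v ∈ f
      have heq : q * c * s = c * (q * s) := by ring
      rw [heq]
      exact hcprop (q * s) (S.mul_mem (hRS hq) hs) v hv

/-- If the topologies agree then there is a nonzero conductor `c` with `cS ⊆ R`. -/
lemma exists_conductor (R S : Subring K) (hR : R ≠ ⊤)
    (hRfrac : ∀ x : K, ∃ a ∈ R, ∃ b ∈ R, b ≠ 0 ∧ x = a / b)
    (hRS : (R : Set K) ⊆ (S : Set K))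
    (h : adicTopology R = adicTopology S) :
    ∃ c : K, c ≠ 0 ∧ ∀ s ∈ S, c * s ∈ R := by
  classical
  have hRopen : IsOpen[adicTopology S] (R : Set K) := by
    rw [← h]
    have : (R : Set K) = {x | ∃ r ∈ R, x = (1 : K) * r + 0} := by
      ext x
      constructor
      · intro hx; exact ⟨x, hx, by ring⟩
      · rintro ⟨r, hr, rfl⟩; simpa using hr
    rw [this]
    exact TopologicalSpace.GenerateOpen.basic _ ⟨1, 0, one_ne_zero, rfl⟩
  letI := adicTopology S
  have hbasis := TopologicalSpace.isTopologicalBasis_of_subbasis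
    (s := adicBasis S) (t := adicTopology S) rfl
  obtain ⟨v, ⟨f, ⟨hffin, hfsub⟩, rfl⟩, h0v, hvR⟩ :=
    hbasis.exists_subset_of_mem_open (show (0 : K) ∈ (R : Set K) from R.zero_mem) hRopen
  have h0 : ∀ u ∈ f, (0 : K) ∈ u := fun u hu => h0v u hu
  obtain ⟨c, hcR, hc, hcprop⟩ := key_induction R S hRfrac hRS f hffin hfsub h0
  refine ⟨c, hc, fun s hs => ?_⟩
  -- f must be nonempty, otherwise R = ⊤
  rcases Set.eq_empty_or_nonempty f with hfe | hfne
  · exfalso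
    apply hR
    rw [Subring.eq_top_iff']
    intro x
    have : x ∈ ⋂₀ f := by rw [hfe]; simp
    exact hvR this
  · exact hvR fun u hu => hcprop s hs u hu

/-- A nonzero conductor plus Noetherianness gives finiteness of `S` over `R`. -/
lemma finite_of_conductor (R S : Subring K) (hNoeth : IsNoetherianRing ↥R)
    (hRS : (R : Set K) ⊆ (S : Set K)) (c : K) (hc : c ≠ 0)
    (hcS : ∀ s ∈ S, c * s ∈ R) :
    IsFiniteModuleOver R S := by
  classical
  set I : Ideal ↥R :=
    { carrier := {r : ↥R | c⁻¹ * (r : K) ∈ S}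
      add_mem' := fun {x y} hx hy => by
        simp only [Set.mem_setOf_eq] at *
        push_cast
        rw [mul_add]
        exact S.add_mem hx hy
      zero_mem' := by
        simp only [Set.mem_setOf_eq]
        push_cast
        rw [mul_zero]
        exact S.zero_mem
      smul_mem' := fun r x hx => by
        simp only [Set.mem_setOf_eq, smul_eq_mul] at *
        push_cast
        have : c⁻¹ * ((r : K) * (x : K)) = (r : K) * (c⁻¹ * (x : K)) := by ring
        rw [this]
        exact S.mul_mem (hRS r.2) hx } with hI
  have hIfg : I.FG := IsNoetherian.noetherian I
  obtain ⟨G, hG⟩ := hIfg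
  refine ⟨G.image (fun g : ↥R => c⁻¹ * (g : K)), ?_, ?_⟩
  · intro x hx
    simp only [Finset.coe_image, Set.mem_image, Finset.mem_coe] at hx
    obtain ⟨g, hgG, rfl⟩ := hx
    have hgI : g ∈ I := by
      rw [← hG]
      exact Ideal.subset_span (by exact_mod_cast hgG)
    exact hgI
  · intro s hs
    have h1 : c * s ∈ R := hcS s hs
    have h2 : (⟨c * s, h1⟩ : ↥R) ∈ I := by
      show c⁻¹ * (c * s) ∈ S
      rw [← mul_assoc, inv_mul_cancel₀ hc, one_mul]
      exact hs
    rw [← hG, Ideal.span, Submodule.mem_span_finset] at h2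
    obtain ⟨fcoef, -, hf⟩ := h2
    refine ⟨fun x => if h : c * x ∈ R then ((fcoef ⟨c * x, h⟩ : ↥R) : K) else 0, ?_, ?_⟩
    · intro x _
      dsimp only
      split
      · exact Subtype.coe_prop _
      · exact R.zero_mem
    · have hinj : ∀ x ∈ G, ∀ y ∈ G, c⁻¹ * (x : ↥R) = c⁻¹ * (y : ↥R) → x = y := by
        intro x _ y _ hxy
        exact Subtype.ext (mul_left_cancel₀ (inv_ne_zero hc) hxy)
      rw [Finset.sum_image hinj]
      have key : ∀ g : ↥R,
          (if h : c * (c⁻¹ * (g : K)) ∈ R then ((fcoef ⟨c * (c⁻¹ * (g : K)), h⟩ : ↥R) : K) else 0)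
            = (fcoef g : K) := by
        intro g
        have hg : c * (c⁻¹ * (g : K)) = (g : K) := by field_simp
        have hcond : c * (c⁻¹ * (g : K)) ∈ R := by rw [hg]; exact g.2
        rw [dif_pos hcond]
        congr 1
        exact congrArg fcoef (Subtype.ext hg)
      calc s = c⁻¹ * (c * s) := by rw [← mul_assoc, inv_mul_cancel₀ hc, one_mul]
        _ = c⁻¹ * ((⟨c * s, h1⟩ : ↥R) : K) := rfl
        _ = c⁻¹ * ((∑ g ∈ G, fcoef g • g : ↥R) : K) := by rw [hf]
        _ = c⁻¹ * (∑ g ∈ G, (fcoef g : K) * (g : K)) := by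
            congr 1
            push_cast
            rfl
        _ = ∑ g ∈ G, (fcoef g : K) * (c⁻¹ * (g : K)) := by
            rw [Finset.mul_sum]; apply Finset.sum_congr rfl; intros; ring
        _ = ∑ g ∈ G,
            (if h : c * (c⁻¹ * (g : K)) ∈ R then ((fcoef ⟨c * (c⁻¹ * (g : K)), h⟩ : ↥R) : K)
              else 0) * (c⁻¹ * (g : K)) := by
            apply Finset.sum_congr rfl; intro g _; rw [key g]

/-- A finite module has a nonzero conductor. -/
lemma conductor_of_finite (R S : Subring K)
    (hRfrac : ∀ x : K, ∃ a ∈ R, ∃ b ∈ R, b ≠ 0 ∧ x = a / b)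
    (h : IsFiniteModuleOver R S) :
    ∃ c : K, c ≠ 0 ∧ ∀ s ∈ S, c * s ∈ R := by
  classical
  obtain ⟨t, htS, hgen⟩ := h
  choose af haf bf hbf hbfne hx using hRfrac
  refine ⟨∏ x ∈ t, bf x, Finset.prod_ne_zero_iff.mpr fun x _ => hbfne x, ?_⟩
  have hmul : ∀ x ∈ t, (∏ y ∈ t, bf y) * x ∈ R := by
    intro x hxt
    have hbx : bf x * x = af x := by
      have h1 : bf x * x = bf x * (af x / bf x) := by rw [← hx x]
      rw [h1, mul_comm, div_mul_cancel₀ _ (hbfne x)]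
    rw [← Finset.mul_prod_erase t bf hxt]
    have : bf x * (∏ y ∈ t.erase x, bf y) * x = (∏ y ∈ t.erase x, bf y) * (bf x * x) := by ring
    rw [this, hbx]
    exact R.mul_mem (Subring.prod_mem R fun y _ => hbf y) (haf x)
  intro s hs
  obtain ⟨cf, hcf, hsum⟩ := hgen s hs
  rw [hsum, Finset.mul_sum]
  apply Subring.sum_mem
  intro x hxt
  have : (∏ y ∈ t, bf y) * (cf x * x) = cf x * ((∏ y ∈ t, bf y) * x) := by ring
  rw [this]
  exact R.mul_mem (hcf x hxt) (hmul x hxt)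

end Statement3Aux

/-- Let `R` be a Noetherian domain with fraction field `K`, `R ≠ K`, and let
`S` be the integral closure of `R` in `K`. Then `S` is a finite `R`-module (i.e. `R` is N-1)
if and only if the `R`-adic and `S`-adic topologies on `K` agree. -/
theorem statement3 {K : Type*} [Field K] (R S : Subring K)
    (hNoeth : IsNoetherianRing ↥R)
    (hR : R ≠ ⊤)
    (hRfrac : ∀ x : K, ∃ a ∈ R, ∃ b ∈ R, b ≠ 0 ∧ x = a / b)
    (hSclosure : S = (integralClosure ↥R K).toSubring) :
    IsFiniteModuleOver R S ↔ adicTopology R = adicTopology S := by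
  have hRS : (R : Set K) ⊆ (S : Set K) := by
    intro r hr
    rw [hSclosure]
    exact Subalgebra.algebraMap_mem (integralClosure ↥R K) ⟨r, hr⟩
  constructor
  · intro h
    obtain ⟨c, hc, hcS⟩ := Statement3Aux.conductor_of_finite R S hRfrac h
    exact le_antisymm (Statement3Aux.le_left R S hRS)
      (Statement3Aux.le_right R S c hc hcS)
  · intro h
    obtain ⟨c, hc, hcS⟩ := Statement3Aux.exists_conductor R S hR hRfrac hRS h
    exact Statement3Aux.finite_of_conductor R S hNoeth hRS c hc hcS
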